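/- Let E and F be complex Hilbert spaces, U ⊆ ℂ an open set, and B : U → L(E, F) a family of continuous linear maps such that: (a) for every f ∈ E and g ∈ F the scalar function z ↦ ⟨g, B(z) f⟩ is holomorphic on U (B is weakly analytic), and (b) for every f ∈ E the map z ↦ B(z) f is continuous from U into F. Then the map z ↦ B(z) is analytic on U with respect to the operator norm: at every z₀ ∈ U it admits a derivative B'(z₀) ∈ L(E, F) in operator norm, and is given locally by a norm-convergent power series. -/

import Mathlib

open Metric Set Filter Complex Topology

lemma norm_le_of_inner_le {F : Type*} [NormedAddCommGroup F] [InnerProductSpace ℂ F]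
    {v : F} {c : ℝ} (hc : 0 ≤ c) (h : ∀ g : F, ‖(inner ℂ g v : ℂ)‖ ≤ c * ‖g‖) : ‖v‖ ≤ c := by
  rcases eq_or_ne v 0 with rfl | hv
  · simpa using hc
  · have hvp : (0 : ℝ) < ‖v‖ := norm_pos_iff.2 hv
    have h2 := h v
    have h4 : ‖v‖ * ‖v‖ ≤ ‖(inner ℂ v v : ℂ)‖ := by
      rw [← inner_self_eq_norm_mul_norm (𝕜 := ℂ) v]
      exact (Complex.re_le_norm _)
    have h5 : ‖v‖ * ‖v‖ ≤ c * ‖v‖ := h4.trans h2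
    nlinarith

/-- Quantitative second-order Taylor estimate from Cauchy coefficient bounds. -/
lemma taylor2 {φ : ℂ → ℂ} {z₀ : ℂ} {r : NNReal} {K : ℝ} (hr : 0 < r) (hK : 0 ≤ K)
    (hφ : DifferentiableOn ℂ φ (closedBall z₀ r))
    (hb : ∀ w ∈ sphere z₀ (r : ℝ), ‖φ w‖ ≤ K)
    {z : ℂ} (hz : dist z z₀ ≤ (r : ℝ) / 2) :
    ‖φ z - φ z₀ - (z - z₀) * deriv φ z₀‖ ≤ 2 * K / (r : ℝ) ^ 2 * ‖z - z₀‖ ^ 2 := by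
  have hr' : (0 : ℝ) < r := hr
  have hp : HasFPowerSeriesOnBall φ (cauchyPowerSeries φ z₀ r) z₀ r :=
    hφ.hasFPowerSeriesOnBall hr
  set p := cauchyPowerSeries φ z₀ (r : ℝ) with hpdef
  have hcont : Continuous fun θ : ℝ => φ (circleMap z₀ r θ) :=
    hφ.continuousOn.comp_continuous (continuous_circleMap _ _)
      (fun θ => sphere_subset_closedBall (circleMap_mem_sphere z₀ hr'.le θ))
  have hint : (2 * Real.pi)⁻¹ * ∫ θ : ℝ in (0)..2 * Real.pi, ‖φ (circleMap z₀ r θ)‖ ≤ K := by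
    have h1 : (∫ θ : ℝ in (0)..2 * Real.pi, ‖φ (circleMap z₀ r θ)‖) ≤
        ∫ _ : ℝ in (0)..2 * Real.pi, K := by
      apply intervalIntegral.integral_mono_on Real.two_pi_pos.le
        (hcont.norm.intervalIntegrable _ _) (intervalIntegrable_const)
      intro θ _
      exact hb _ (circleMap_mem_sphere z₀ hr'.le θ)
    have h2 : (∫ _ : ℝ in (0)..2 * Real.pi, K) = 2 * Real.pi * K := by simp [mul_comm]
    calc (2 * Real.pi)⁻¹ * ∫ θ : ℝ in (0)..2 * Real.pi, ‖φ (circleMap z₀ r θ)‖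
        ≤ (2 * Real.pi)⁻¹ * (2 * Real.pi * K) := by
          apply mul_le_mul_of_nonneg_left _ (by positivity)
          rw [← h2]; exact h1
      _ = K := by field_simp
  have hcoeff : ∀ n, ‖p.coeff n‖ ≤ K * ((r : ℝ)⁻¹) ^ n := by
    intro n
    have h1 : ‖p.coeff n‖ ≤ ‖p n‖ := by
      have h := (p n).le_opNorm (fun _ => (1 : ℂ))
      calc ‖p.coeff n‖ = ‖p n (fun _ => (1 : ℂ))‖ := rfl
        _ ≤ ‖p n‖ * ∏ _i : Fin n, ‖(1 : ℂ)‖ := h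
        _ = ‖p n‖ := by simp
    have h2 := norm_cauchyPowerSeries_le φ z₀ r n
    have h3 : |(r : ℝ)| = r := abs_of_pos hr'
    calc ‖p.coeff n‖ ≤ ‖p n‖ := h1
      _ ≤ ((2 * Real.pi)⁻¹ * ∫ θ : ℝ in (0)..2 * Real.pi, ‖φ (circleMap z₀ r θ)‖)
            * |(r : ℝ)|⁻¹ ^ n := h2
      _ ≤ K * ((r : ℝ)⁻¹) ^ n := by
          rw [h3]
          exact mul_le_mul_of_nonneg_right hint (by positivity)
  set y : ℂ := z - z₀ with hydef
  have hyr : ‖y‖ ≤ (r : ℝ) / 2 := by rwa [hydef, ← dist_eq_norm]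
  have hylt : ‖y‖ < (r : ℝ) := lt_of_le_of_lt hyr (by linarith)
  have hmem : y ∈ Metric.eball (0 : ℂ) r := by
    rw [Metric.mem_eball, edist_zero_right]
    exact_mod_cast (by exact_mod_cast hylt : ‖y‖₊ < r)
  have hsum : HasSum (fun n : ℕ => y ^ n • p.coeff n) (φ (z₀ + y)) := by
    have h := hp.hasSum hmem
    have he : (fun n : ℕ => p n fun _ => y) = fun n : ℕ => y ^ n • p.coeff n :=
      funext fun n => p.apply_eq_pow_smul_coeff
    rwa [he] at h
  have htail : HasSum (fun n : ℕ => y ^ (n + 2) • p.coeff (n + 2))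
      (φ (z₀ + y) - ∑ i ∈ Finset.range 2, y ^ i • p.coeff i) :=
    ((hasSum_nat_add_iff' 2).2 hsum)
  have hc0 : p.coeff 0 = φ z₀ := hp.coeff_zero (fun _ => (1 : ℂ))
  have hc1 : p.coeff 1 = deriv φ z₀ := (hp.hasFPowerSeriesAt.deriv).symm
  have hrange : (∑ i ∈ Finset.range 2, y ^ i • p.coeff i) = φ z₀ + y * deriv φ z₀ := by
    rw [Finset.sum_range_succ, Finset.sum_range_one, hc0, hc1]
    simp [smul_eq_mul]
  set t : ℝ := ‖y‖ / r with htdef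
  have ht0 : 0 ≤ t := by positivity
  have ht2 : t ≤ 1 / 2 := by rw [htdef, div_le_div_iff₀ hr' (by norm_num)]; linarith
  have ht1 : t < 1 := lt_of_le_of_lt ht2 (by norm_num)
  have hbound : ∀ n : ℕ, ‖y ^ (n + 2) • p.coeff (n + 2)‖ ≤ (K * t ^ 2) * t ^ n := by
    intro n
    have he : ‖y ^ (n + 2) • p.coeff (n + 2)‖ = ‖y‖ ^ (n + 2) * ‖p.coeff (n + 2)‖ := by
      rw [norm_smul, norm_pow]
    rw [he]
    calc ‖y‖ ^ (n + 2) * ‖p.coeff (n + 2)‖ ≤ ‖y‖ ^ (n + 2) * (K * ((r : ℝ)⁻¹) ^ (n + 2)) :=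
          mul_le_mul_of_nonneg_left (hcoeff _) (by positivity)
      _ = (K * t ^ 2) * t ^ n := by
          rw [htdef]; ring
  have hgeom : HasSum (fun n : ℕ => (K * t ^ 2) * t ^ n) ((K * t ^ 2) * (1 - t)⁻¹) :=
    (hasSum_geometric_of_lt_one ht0 ht1).mul_left _
  have hnorm : ‖φ (z₀ + y) - ∑ i ∈ Finset.range 2, y ^ i • p.coeff i‖ ≤
      (K * t ^ 2) * (1 - t)⁻¹ := by
    rw [← htail.tsum_eq]
    exact tsum_of_norm_bounded hgeom hbound
  have hfin : (K * t ^ 2) * (1 - t)⁻¹ ≤ 2 * K / (r : ℝ) ^ 2 * ‖y‖ ^ 2 := by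
    have h1 : (1 - t)⁻¹ ≤ 2 := by
      rw [inv_le_comm₀ (by linarith) (by norm_num)]
      linarith
    calc (K * t ^ 2) * (1 - t)⁻¹ ≤ (K * t ^ 2) * 2 := by
          apply mul_le_mul_of_nonneg_left h1 (by positivity)
      _ = 2 * K / (r : ℝ) ^ 2 * ‖y‖ ^ 2 := by
          rw [htdef]; field_simp
  have hzy : z = z₀ + y := by rw [hydef]; ring
  calc ‖φ z - φ z₀ - (z - z₀) * deriv φ z₀‖
      = ‖φ (z₀ + y) - ∑ i ∈ Finset.range 2, y ^ i • p.coeff i‖ := by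
        rw [hrange, hzy]; ring_nf
    _ ≤ (K * t ^ 2) * (1 - t)⁻¹ := hnorm
    _ ≤ 2 * K / (r : ℝ) ^ 2 * ‖y‖ ^ 2 := hfin

/-- If `B : U → L(E, F)` is weakly analytic (all matrix elements `z ↦ ⟨g, B(z)f⟩` are
holomorphic on the open set `U`) and strongly continuous (`z ↦ B(z)f` continuous on `U` for
every `f`), then `B` is analytic in operator norm on `U`: at every `z₀ ∈ U` it has a derivative
`B'(z₀) ∈ L(E, F)` and is given locally by a norm-convergent power series. -/
theorem weakly_analytic_to_norm_analytic
    {E F : Type*} [NormedAddCommGroup E] [InnerProductSpace ℂ E] [CompleteSpace E]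
    [NormedAddCommGroup F] [InnerProductSpace ℂ F] [CompleteSpace F]
    (U : Set ℂ) (hU : IsOpen U)
    (B : ℂ → (E →L[ℂ] F))
    (hweak : ∀ (f : E) (g : F), DifferentiableOn ℂ (fun z => (inner ℂ g (B z f) : ℂ)) U)
    (hstrong : ∀ f : E, ContinuousOn (fun z => B z f) U) :
    ∀ z₀ ∈ U, (∃ B' : E →L[ℂ] F, HasDerivAt B B' z₀) ∧ AnalyticAt ℂ B z₀ := by
  have key : ∀ z₀ ∈ U, ∃ D : E →L[ℂ] F, HasDerivAt B D z₀ := by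
    intro z₀ hz₀
    obtain ⟨ρ, hρ, hρU⟩ : ∃ ρ > 0, closedBall z₀ ρ ⊆ U :=
      (Metric.nhds_basis_closedBall.mem_iff.1 (hU.mem_nhds hz₀)).imp
        (fun ρ h => ⟨h.1, h.2⟩)
    -- uniform bound on the closed ball via Banach–Steinhaus
    obtain ⟨M, hM⟩ : ∃ M, ∀ w : closedBall z₀ ρ, ‖B (w : ℂ)‖ ≤ M := by
      apply banach_steinhaus
      intro f
      obtain ⟨C, hC⟩ := (isCompact_closedBall z₀ ρ).exists_bound_of_continuousOn
        ((hstrong f).mono hρU)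
      exact ⟨C, fun w => hC w w.2⟩
    have hM0 : 0 ≤ M := le_trans (norm_nonneg _) (hM ⟨z₀, mem_closedBall_self hρ.le⟩)
    have hMball : ∀ w ∈ closedBall z₀ ρ, ‖B w‖ ≤ M := fun w hw => hM ⟨w, hw⟩
    set r : NNReal := ⟨ρ, hρ.le⟩ with hrdef
    have hr : 0 < r := hρ
    -- scalar second-order Taylor estimate for each pair (f, g)
    have hkey : ∀ (f : E) (g : F), ∀ z : ℂ, dist z z₀ ≤ ρ / 2 →
        ‖(inner ℂ g (B z f) : ℂ) - inner ℂ g (B z₀ f)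
            - (z - z₀) * deriv (fun w => (inner ℂ g (B w f) : ℂ)) z₀‖
          ≤ 2 * (M * ‖f‖ * ‖g‖) / ρ ^ 2 * ‖z - z₀‖ ^ 2 := by
      intro f g z hz
      have := taylor2 (φ := fun w => (inner ℂ g (B w f) : ℂ)) (r := r)
        (K := M * ‖f‖ * ‖g‖) hr (by positivity)
        ((hweak f g).mono hρU)
        (fun w hw => by
          calc ‖(inner ℂ g (B w f) : ℂ)‖ ≤ ‖g‖ * ‖B w f‖ := norm_inner_le_norm _ _
            _ ≤ ‖g‖ * (‖B w‖ * ‖f‖) :=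
              mul_le_mul_of_nonneg_left ((B w).le_opNorm f) (norm_nonneg _)
            _ ≤ ‖g‖ * (M * ‖f‖) := by
              apply mul_le_mul_of_nonneg_left _ (norm_nonneg _)
              exact mul_le_mul_of_nonneg_right (hMball w (sphere_subset_closedBall hw))
                (norm_nonneg _)
            _ = M * ‖f‖ * ‖g‖ := by ring) hz
      exact this
    -- estimate on the slope
    set Q : ℂ → (E →L[ℂ] F) := slope B z₀ with hQdef
    have hQd : ∀ (f : E) (g : F), ∀ z : ℂ, z ≠ z₀ →
        (inner ℂ g (Q z f) : ℂ) = (z - z₀)⁻¹ *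
          ((inner ℂ g (B z f) : ℂ) - inner ℂ g (B z₀ f)) := by
      intro f g z hz
      have : Q z = (z - z₀)⁻¹ • (B z - B z₀) := by
        rw [hQdef]; rfl
      rw [this]
      simp [inner_smul_right, inner_sub_right]
    have hQest1 : ∀ z : ℂ, z ≠ z₀ → dist z z₀ ≤ ρ / 2 → ∀ (f : E) (g : F),
        ‖(inner ℂ g (Q z f) : ℂ) - deriv (fun w => (inner ℂ g (B w f) : ℂ)) z₀‖
          ≤ 2 * (M * ‖f‖ * ‖g‖) / ρ ^ 2 * ‖z - z₀‖ := by
      intro z hz hzd f g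
      have hz0 : z - z₀ ≠ 0 := sub_ne_zero.2 hz
      have h1 : (inner ℂ g (Q z f) : ℂ) - deriv (fun w => (inner ℂ g (B w f) : ℂ)) z₀
          = (z - z₀)⁻¹ * ((inner ℂ g (B z f) : ℂ) - inner ℂ g (B z₀ f)
            - (z - z₀) * deriv (fun w => (inner ℂ g (B w f) : ℂ)) z₀) := by
        rw [hQd f g z hz]
        field_simp
      rw [h1, norm_mul, norm_inv]
      have h2 := hkey f g z hzd
      calc ‖z - z₀‖⁻¹ * ‖(inner ℂ g (B z f) : ℂ) - inner ℂ g (B z₀ f)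
              - (z - z₀) * deriv (fun w => (inner ℂ g (B w f) : ℂ)) z₀‖
          ≤ ‖z - z₀‖⁻¹ * (2 * (M * ‖f‖ * ‖g‖) / ρ ^ 2 * ‖z - z₀‖ ^ 2) :=
            mul_le_mul_of_nonneg_left h2 (by positivity)
        _ = 2 * (M * ‖f‖ * ‖g‖) / ρ ^ 2 * ‖z - z₀‖ := by
            have hne : ‖z - z₀‖ ≠ 0 := norm_ne_zero_iff.2 hz0
            rw [show (2 * (M * ‖f‖ * ‖g‖) / ρ ^ 2 * ‖z - z₀‖ ^ 2)
              = ‖z - z₀‖ * (2 * (M * ‖f‖ * ‖g‖) / ρ ^ 2 * ‖z - z₀‖) from by ring,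
              inv_mul_cancel_left₀ hne]
    have hQest : ∀ z z' : ℂ, z ≠ z₀ → z' ≠ z₀ → dist z z₀ ≤ ρ / 2 → dist z' z₀ ≤ ρ / 2 →
        ‖Q z - Q z'‖ ≤ 2 * M / ρ ^ 2 * (dist z z₀ + dist z' z₀) := by
      intro z z' hz hz' hzd hzd'
      apply ContinuousLinearMap.opNorm_le_bound _ (by positivity)
      intro f
      apply norm_le_of_inner_le (by positivity)
      intro g
      have h1 := hQest1 z hz hzd f g
      have h2 := hQest1 z' hz' hzd' f g
      have h3 : (inner ℂ g ((Q z - Q z') f) : ℂ)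
          = ((inner ℂ g (Q z f) : ℂ) - deriv (fun w => (inner ℂ g (B w f) : ℂ)) z₀)
            - ((inner ℂ g (Q z' f) : ℂ) - deriv (fun w => (inner ℂ g (B w f) : ℂ)) z₀) := by
        simp [inner_sub_right]
      rw [h3]
      calc ‖((inner ℂ g (Q z f) : ℂ) - deriv (fun w => (inner ℂ g (B w f) : ℂ)) z₀)
            - ((inner ℂ g (Q z' f) : ℂ) - deriv (fun w => (inner ℂ g (B w f) : ℂ)) z₀)‖
          ≤ ‖(inner ℂ g (Q z f) : ℂ) - deriv (fun w => (inner ℂ g (B w f) : ℂ)) z₀‖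
            + ‖(inner ℂ g (Q z' f) : ℂ) - deriv (fun w => (inner ℂ g (B w f) : ℂ)) z₀‖ :=
            norm_sub_le _ _
        _ ≤ 2 * (M * ‖f‖ * ‖g‖) / ρ ^ 2 * ‖z - z₀‖
            + 2 * (M * ‖f‖ * ‖g‖) / ρ ^ 2 * ‖z' - z₀‖ := add_le_add h1 h2
        _ = 2 * M / ρ ^ 2 * (dist z z₀ + dist z' z₀) * ‖f‖ * ‖g‖ := by
            rw [dist_eq_norm, dist_eq_norm]
            ring
    -- the slope has a limit along the punctured neighborhood filter
    have hcauchy : Cauchy (map Q (𝓝[≠] z₀)) := by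
      rw [Metric.cauchy_iff]
      constructor
      · exact map_neBot
      · intro ε hε
        set c : ℝ := 2 * M / ρ ^ 2 with hcdef
        have hc0 : 0 ≤ c := by positivity
        set δ : ℝ := min (ρ / 4) (ε / (2 * (c + 1))) with hδdef
        have hδ0 : 0 < δ := lt_min (by linarith) (by positivity)
        refine ⟨Q '' (ball z₀ δ \ {z₀}), ?_, ?_⟩
        · apply image_mem_map
          exact inter_mem (mem_nhdsWithin_of_mem_nhds (ball_mem_nhds _ hδ0))
            self_mem_nhdsWithin
        · rintro x ⟨z, ⟨hzb, hzne⟩, rfl⟩ y ⟨z', ⟨hzb', hzne'⟩, rfl⟩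
          have hd1 : dist z z₀ < δ := mem_ball.1 hzb
          have hd2 : dist z' z₀ < δ := mem_ball.1 hzb'
          have hδρ : δ ≤ ρ / 4 := min_le_left _ _
          have hδε : δ ≤ ε / (2 * (c + 1)) := min_le_right _ _
          have h := hQest z z' hzne hzne'
            (by linarith) (by linarith)
          rw [dist_eq_norm]
          calc ‖Q z - Q z'‖ ≤ c * (dist z z₀ + dist z' z₀) := h
            _ ≤ c * (2 * δ) := by
                apply mul_le_mul_of_nonneg_left _ hc0
                linarith
            _ < (c + 1) * (2 * δ) := by nlinarith
            _ ≤ (c + 1) * (2 * (ε / (2 * (c + 1)))) := by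
                apply mul_le_mul_of_nonneg_left _ (by linarith)
                linarith
            _ = ε := by field_simp
    obtain ⟨D, hD⟩ := CompleteSpace.complete hcauchy
    exact ⟨D, hasDerivAt_iff_tendsto_slope.2 hD⟩
  intro z₀ hz₀
  have hdiff : DifferentiableOn ℂ B U := fun w hw =>
    ((key w hw).choose_spec).differentiableAt.differentiableWithinAt
  exact ⟨key z₀ hz₀, hdiff.analyticAt (hU.mem_nhds hz₀)⟩
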